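/- For every real number p with 0 ≤ p ≤ 0.0003, the probability that a random sample of 2500 ballots contains at least 3 erroneous ballots satisfies 1 − (1 − p)^2500 − 2500·p·(1 − p)^2499 − (2500·2499/2)·p^2·(1 − p)^2498 < 0.05. Hence finding 3 ballots with errors in a sample of 2500 gives a lower 95% confidence bound for the ballot error rate of about 0.0003; moreover 0.0003 > 71/339159, the error rate that would suffice to change the 2016 Tasmanian Senate outcome (a 141-vote difference among 339,159 votes). -/

import Mathlib

/-- The probability that a sample of 2500 ballots contains at most 2
erroneous ballots, written as `(1-p)^2498 * (quadratic in p)`. -/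
noncomputable def gfun : ℝ → ℝ :=
  fun p => (1 - p) ^ 2498 * ((1 - p) ^ 2 + 2500 * p * (1 - p) + 3123750 * p ^ 2)

lemma gfun_hasDeriv (p : ℝ) :
    HasDerivAt gfun
      ((2498 * (1 - p) ^ 2497 * (-1)) * ((1 - p) ^ 2 + 2500 * p * (1 - p) + 3123750 * p ^ 2)
        + (1 - p) ^ 2498 * ((2 * (1 - p) ^ 1 * (-1)) + (2500 * (1 - p) + 2500 * p * (-1))
            + 3123750 * (2 * p ^ 1))) p := by
  have h1 : HasDerivAt (fun p : ℝ => 1 - p) (-1) p := (hasDerivAt_id p).const_sub 1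
  have h2 : HasDerivAt (fun p : ℝ => (1 - p) ^ 2498) (2498 * (1 - p) ^ 2497 * (-1)) p := by
    simpa using h1.fun_pow 2498
  have h3 : HasDerivAt (fun p : ℝ => (1 - p) ^ 2) (2 * (1 - p) ^ 1 * (-1)) p := by
    simpa using h1.fun_pow 2
  have h4 : HasDerivAt (fun p : ℝ => 2500 * p * (1 - p)) (2500 * (1 - p) + 2500 * p * (-1)) p := by
    have := ((hasDerivAt_id p).const_mul (2500 : ℝ)).fun_mul h1
    simpa [mul_comm] using this
  have h5 : HasDerivAt (fun p : ℝ => 3123750 * p ^ 2) (3123750 * (2 * p ^ 1)) p := by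
    simpa using (hasDerivAt_pow 2 p).const_mul (3123750 : ℝ)
  exact h2.mul ((h3.add h4).add h5)

lemma gfun_anti : AntitoneOn gfun (Set.Icc (0:ℝ) 0.0003) := by
  apply antitoneOn_of_deriv_nonpos (convex_Icc _ _)
  · exact fun p _ => (gfun_hasDeriv p).continuousAt.continuousWithinAt
  · intro p _
    exact (gfun_hasDeriv p).differentiableAt.differentiableWithinAt
  · intro p hp
    rw [interior_Icc, Set.mem_Ioo] at hp
    rw [(gfun_hasDeriv p).deriv]
    have hq : (0:ℝ) ≤ 1 - p := by
      have := hp.2; norm_num at this ⊢; linarith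
    have hq7 : (0:ℝ) ≤ (1 - p) ^ 2497 := pow_nonneg hq _
    have e8 : (1 - p) ^ 2498 = (1 - p) ^ 2497 * (1 - p) := by
      rw [show (2498 : ℕ) = 2497 + 1 from rfl, pow_succ]
    rw [e8]
    generalize (1 - p) ^ 2497 = Q at hq7
    have key : ((2498 * Q * (-1)) * ((1 - p) ^ 2 + 2500 * p * (1 - p) + 3123750 * p ^ 2)
        + Q * (1 - p) * ((2 * (1 - p) ^ 1 * (-1)) + (2500 * (1 - p) + 2500 * p * (-1))
            + 3123750 * (2 * p ^ 1)))
        = -(Q * (2498 * 3123750 * p ^ 2)) := by ring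
    rw [key]
    exact neg_nonpos.mpr (mul_nonneg hq7 (by positivity))

lemma gfun_num : gfun 0.0003 > 0.95 := by
  unfold gfun; norm_num
  have h : ((9997:ℝ) / 10000) ^ 2500 ≤ (9997 / 10000) ^ 2498 :=
    pow_le_pow_of_le_one (by norm_num) (by norm_num) (by norm_num)
  have h2 : ((9997:ℝ) / 10000) ^ 2500 = (((9997:ℝ) / 10000) ^ 50) ^ 50 := by rw [← pow_mul]
  rw [h2] at h
  have h3 : (19:ℝ) / 20 < (((9997:ℝ) / 10000) ^ 50) ^ 50 * (203031259 / 100000000) := by norm_num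
  have h4 := mul_le_mul_of_nonneg_right h (by norm_num : (0:ℝ) ≤ 203031259 / 100000000)
  exact lt_of_lt_of_le h3 h4

/-- For every real `p` with `0 ≤ p ≤ 0.0003`, the probability that a random
sample of 2500 ballots contains at least 3 erroneous ballots satisfies
`1 - (1 - p)^2500 - 2500·p·(1 - p)^2499 - (2500·2499/2)·p²·(1 - p)^2498 < 0.05`.
Hence finding 3 ballots with errors in a sample of 2500 gives a lower 95%
confidence bound of about `0.0003` for the ballot error rate; moreover
`0.0003 > 71/339159`, the rate needed to change the 2016 Tasmanian outcome. -/
theorem lower_confidence_bound_2500 :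
    (∀ p : ℝ, 0 ≤ p → p ≤ 0.0003 →
      1 - (1 - p) ^ (2500 : ℕ) - 2500 * p * (1 - p) ^ (2499 : ℕ)
        - (2500 * 2499 / 2) * p ^ 2 * (1 - p) ^ (2498 : ℕ) < 0.05) ∧
    (0.0003 : ℝ) > 71 / 339159 := by
  constructor
  · intro p hp0 hp1
    have hmem : p ∈ Set.Icc (0:ℝ) 0.0003 := ⟨hp0, hp1⟩
    have hmem0 : (0.0003 : ℝ) ∈ Set.Icc (0:ℝ) 0.0003 := by constructor <;> norm_num
    have hg := gfun_anti hmem hmem0 hp1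
    have hnum := gfun_num
    have hrw : 1 - (1 - p) ^ (2500 : ℕ) - 2500 * p * (1 - p) ^ (2499 : ℕ)
        - (2500 * 2499 / 2) * p ^ 2 * (1 - p) ^ (2498 : ℕ) = 1 - gfun p := by
      unfold gfun
      have h1 : (1 - p) ^ (2500 : ℕ) = (1 - p) ^ 2498 * ((1 - p) * (1 - p)) := by
        rw [show (2500 : ℕ) = 2498 + 1 + 1 from rfl, pow_succ, pow_succ, mul_assoc]
      have h2 : (1 - p) ^ (2499 : ℕ) = (1 - p) ^ 2498 * (1 - p) := by
        rw [show (2499 : ℕ) = 2498 + 1 from rfl, pow_succ]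
      rw [h1, h2]
      generalize (1 - p) ^ 2498 = Q
      ring
    rw [hrw]
    clear hrw
    linarith only [hg, hnum]
  · norm_num
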